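/- Let t : ℕ → ℝ satisfy t(0) = 0, t(a+b) ≤ t(a) + t(b) + 1 for all a, b ≥ 1, and let c = t(1). Suppose there exists n ≥ 1 such that t(n+q) ≤ t(n) + t(q) for every q ≥ 1. Then limsup_{m→∞} (t(m) - m·c)/(m-1) ≤ (n-1)/n. -/

import Mathlib

theorem stmt_6 (t : ℕ → ℝ) (h0 : t 0 = 0)
    (hsub : ∀ a b : ℕ, 1 ≤ a → 1 ≤ b → t (a + b) ≤ t a + t b + 1)
    (c : ℝ) (hc : c = t 1)
    (n : ℕ) (hn : 1 ≤ n) (himp : ∀ q : ℕ, 1 ≤ q → t (n + q) ≤ t n + t q) :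
    Filter.limsup (fun m : ℕ => (t m - m * c) / (m - 1)) Filter.atTop ≤ ((n : ℝ) - 1) / n := by
  set f : ℕ → ℝ := fun m : ℕ => (t m - m * c) / (m - 1) with hf
  set L : ℝ := ((n : ℝ) - 1) / n with hL
  have hn0 : (0 : ℝ) < n := by exact_mod_cast hn
  -- Lemma A : t j ≤ j*c + (j-1) for j ≥ 1
  have lemA : ∀ j : ℕ, 1 ≤ j → t j ≤ j * c + ((j : ℝ) - 1) := by
    intro j hj
    induction j, hj using Nat.le_induction with
    | base => simp [hc]
    | succ j hj ih =>
      have := hsub j 1 hj le_rfl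
      push_cast
      rw [hc] at *
      linarith
  -- Lemma B : t (k*n + q) ≤ k * t n + t q for q ≥ 1
  have lemB : ∀ k q : ℕ, 1 ≤ q → t (k * n + q) ≤ k * t n + t q := by
    intro k
    induction k with
    | zero => intro q hq; simp
    | succ k ih =>
      intro q hq
      have h1 : (k + 1) * n + q = n + (k * n + q) := by ring
      have h2 : 1 ≤ k * n + q := le_trans hq (Nat.le_add_left _ _)
      have := himp (k * n + q) h2
      rw [h1]
      have := ih q hq
      push_cast
      linarith
  -- eventual bound : f m ≤ L + 1/(m-1) for m ≥ 2
  have hev : ∀ m : ℕ, 2 ≤ m → f m ≤ L + 1 / ((m : ℝ) - 1) := by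
    intro m hm
    set k := (m - 1) / n with hk
    set r := (m - 1) % n + 1 with hr
    have hdm : n * ((m - 1) / n) + (m - 1) % n = m - 1 := Nat.div_add_mod (m - 1) n
    have hm1 : 1 ≤ m := le_trans (by norm_num) hm
    have hmkr : m = k * n + r := by
      have hcom : k * n = n * ((m - 1) / n) := by rw [hk, mul_comm]
      omega
    have hr1 : 1 ≤ r := Nat.le_add_left _ _
    have hrn : r ≤ n := Nat.mod_lt _ (by omega)
    have hm1R : (0 : ℝ) < (m : ℝ) - 1 := by
      have : (2 : ℝ) ≤ m := by exact_mod_cast hm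
      linarith
    have hmR : (m : ℝ) = k * n + r := by exact_mod_cast congrArg (Nat.cast : ℕ → ℝ) hmkr
    have hB := lemB k r hr1
    rw [← hmkr] at hB
    have hA1 := lemA n hn
    have hA2 := lemA r hr1
    have hk0 : (0 : ℝ) ≤ (k : ℝ) := Nat.cast_nonneg k
    have hkt : (k : ℝ) * t n ≤ (k : ℝ) * ((n : ℝ) * c + ((n : ℝ) - 1)) :=
      mul_le_mul_of_nonneg_left hA1 hk0
    have h4 : t m - m * c ≤ (k : ℝ) * ((n : ℝ) - 1) + ((r : ℝ) - 1) := by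
      rw [hmR]; nlinarith
    have hrR : (r : ℝ) ≤ n := by exact_mod_cast hrn
    have hr1R : (1 : ℝ) ≤ r := by exact_mod_cast hr1
    have h5 : f m ≤ ((k : ℝ) * ((n : ℝ) - 1) + ((r : ℝ) - 1)) / ((m : ℝ) - 1) := by
      simp only [hf]
      exact (div_le_div_iff_of_pos_right hm1R).mpr h4
    have key : (n : ℝ) * ((k : ℝ) * ((n : ℝ) - 1) + ((r : ℝ) - 1)) ≤
        ((n : ℝ) - 1) * ((m : ℝ) - 1) + n := by
      rw [hmR]; nlinarith
    have h6 : ((k : ℝ) * ((n : ℝ) - 1) + ((r : ℝ) - 1)) / ((m : ℝ) - 1) ≤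
        L + 1 / ((m : ℝ) - 1) := by
      rw [hL, div_add_div _ _ (ne_of_gt hn0) (ne_of_gt hm1R),
        div_le_div_iff₀ hm1R (mul_pos hn0 hm1R)]
      nlinarith [mul_le_mul_of_nonneg_right key hm1R.le]
    exact h5.trans h6
  -- the comparison function tends to L
  set g : ℕ → ℝ := fun m : ℕ => L + 1 / ((m : ℝ) - 1) with hg
  have htend : Filter.Tendsto g Filter.atTop (nhds L) := by
    have h1 : Filter.Tendsto (fun m : ℕ => (m : ℝ) - 1) Filter.atTop Filter.atTop :=
      Filter.tendsto_atTop_add_const_right _ (-1) tendsto_natCast_atTop_atTop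
    have h2 : Filter.Tendsto (fun m : ℕ => 1 / ((m : ℝ) - 1)) Filter.atTop (nhds 0) := by
      simpa [one_div, Function.comp_def] using tendsto_inv_atTop_zero.comp h1
    have h3 := (tendsto_const_nhds (x := L)).add h2
    rw [hg]
    simpa using h3
  have hevle : f ≤ᶠ[Filter.atTop] g := by
    filter_upwards [Filter.eventually_ge_atTop 2] with m hm using hev m hm
  have hL0 : (0 : ℝ) ≤ L := by
    rw [hL]
    apply div_nonneg _ hn0.le
    have : (1 : ℝ) ≤ n := by exact_mod_cast hn
    linarith
  by_cases hcb : Filter.IsCoboundedUnder (· ≤ ·) Filter.atTop f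
  · calc Filter.limsup f Filter.atTop ≤ Filter.limsup g Filter.atTop :=
        Filter.limsup_le_limsup hevle hcb htend.isBoundedUnder_le
      _ = L := htend.limsup_eq
  · have hnb : ¬BddBelow {a : ℝ | ∀ᶠ m in Filter.atTop, f m ≤ a} := by
      rintro ⟨b, hb⟩
      exact hcb ⟨b, fun a ha => hb (by simpa using ha)⟩
    rw [Filter.limsup, Filter.limsSup]
    have : {a : ℝ | ∀ᶠ x in Filter.map f Filter.atTop, x ≤ a} =
        {a : ℝ | ∀ᶠ m in Filter.atTop, f m ≤ a} := by
      ext a; simp [Filter.eventually_map]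
    rw [this, Real.sInf_of_not_bddBelow hnb]
    exact hL0
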